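/- For every prime p, v_{p+1} ≡ 1 (mod p) and v_{p+2} ≡ 1 (mod p). -/

import Mathlib

open Polynomial Finset

noncomputable def v (n : ℕ) : ℤ :=
  if n = 0 then -1 else
  ((1 - X) * ∏ j ∈ Finset.range (2 * n - 2),
      (C ((2 * n : ℤ) - 3 - (j : ℤ)) + C (j : ℤ) * X)).coeff (n - 1)

namespace VAux
variable {p : ℕ} [hF : Fact p.Prime]

lemma prod_range_cast {M : Type*} [CommMonoid M] (f : ZMod p → M) :
    ∏ j ∈ Finset.range p, f (j : ZMod p) = ∏ c : ZMod p, f c := by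
  haveI : NeZero p := ⟨hF.out.ne_zero⟩
  refine Finset.prod_bij' (fun j _ => ((j : ℕ) : ZMod p)) (fun c _ => c.val)
    (fun a ha => Finset.mem_univ _) (fun c _ => Finset.mem_range.mpr (ZMod.val_lt c))
    (fun a ha => ZMod.val_cast_of_lt (Finset.mem_range.mp ha))
    (fun c _ => ZMod.natCast_rightInverse c) (fun a ha => rfl)

lemma prod_erase_zero {M : Type*} [CommMonoid M] (f : ZMod p → M) :
    ∏ c ∈ (Finset.univ : Finset (ZMod p)).erase 0, f c = ∏ x : (ZMod p)ˣ, f x := by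
  refine Finset.prod_bij' (fun c hc => Units.mk0 c (Finset.ne_of_mem_erase hc))
    (fun x _ => (x : ZMod p)) (fun a ha => Finset.mem_univ _)
    (fun x _ => Finset.mem_erase.mpr ⟨x.ne_zero, Finset.mem_univ _⟩)
    (fun a ha => rfl) (fun x _ => Units.mk0_val _ _) (fun a ha => by simp)

lemma prod_X_sub_C_univ :
    ∏ c : ZMod p, (X - C c) = X ^ p - X := by
  have hcard : Fintype.card (ZMod p) = p := ZMod.card p
  have hp1 : p - 1 + 1 = p := by have := hF.out.two_le; omega
  have hmonic : (X ^ p - X : (ZMod p)[X]).Monic :=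
    monic_X_pow_sub (by rw [degree_X]; exact_mod_cast hF.out.one_lt)
  have hroots : (X ^ p - X : (ZMod p)[X]).roots = Finset.univ.val := by
    have := FiniteField.roots_X_pow_card_sub_X (ZMod p)
    rwa [hcard] at this
  have hdeg : (X ^ p - X : (ZMod p)[X]).natDegree = p :=
    FiniteField.X_pow_card_sub_X_natDegree_eq _ hF.out.one_lt
  have hsplits : Splits (X ^ p - X : (ZMod p)[X]) := by
    rw [Polynomial.splits_iff_card_roots, hroots, hdeg]
    simpa using hcard
  have h := hsplits.eq_prod_roots_of_monic hmonic
  rw [hroots] at h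
  rw [h]
  rfl

lemma prod_X_sub_C_units :
    ∏ x : (ZMod p)ˣ, (X - C (x : ZMod p)) = X ^ (p - 1) - 1 := by
  have h1 : ∏ c : ZMod p, (X - C c) = X ^ p - X := prod_X_sub_C_univ
  rw [← Finset.mul_prod_erase _ _ (Finset.mem_univ (0 : ZMod p)), prod_erase_zero] at h1
  have hp1 : p - 1 + 1 = p := by have := hF.out.two_le; omega
  have hx : (X : (ZMod p)[X]) ≠ 0 := X_ne_zero
  apply mul_left_cancel₀ hx
  calc X * ∏ x : (ZMod p)ˣ, (X - C (x : ZMod p))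
      = (X - C 0) * ∏ x : (ZMod p)ˣ, (X - C (x : ZMod p)) := by rw [C_0, sub_zero]
    _ = X ^ p - X := h1
    _ = X * (X ^ (p - 1) - 1) := by rw [mul_sub, mul_one, ← pow_succ', hp1]

lemma prod_units_val : ∏ x : (ZMod p)ˣ, (x : ZMod p) = -1 := by
  have h := FiniteField.prod_univ_units_id_eq_neg_one (K := ZMod p)
  calc ∏ x : (ZMod p)ˣ, (x : ZMod p) = ((∏ x : (ZMod p)ˣ, x : (ZMod p)ˣ) : ZMod p) := by
        exact (map_prod (Units.coeHom (ZMod p)) _ _).symm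
    _ = -1 := by rw [h]; simp

lemma prodA : ∏ c : ZMod p, (C c * X - 1) = X ^ (p - 1) - 1 := by
  rw [← Finset.mul_prod_erase _ _ (Finset.mem_univ (0 : ZMod p)), prod_erase_zero]
  have hfac : ∀ x : (ZMod p)ˣ, C ((x : ZMod p)) * X - 1
      = C ((x : ZMod p)) * (X - C ((x⁻¹ : (ZMod p)ˣ) : ZMod p)) := by
    intro x
    have h : (C ((x : ZMod p)) : (ZMod p)[X]) * C ((x⁻¹ : (ZMod p)ˣ) : ZMod p) = 1 := by
      rw [← C_mul, ← Units.val_mul, mul_inv_cancel, Units.val_one, C_1]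
    rw [mul_sub, h]
  rw [Finset.prod_congr rfl fun x _ => hfac x, Finset.prod_mul_distrib]
  have h2 : ∏ x : (ZMod p)ˣ, (X - C ((x⁻¹ : (ZMod p)ˣ) : ZMod p))
      = ∏ x : (ZMod p)ˣ, (X - C ((x : ZMod p))) :=
    Fintype.prod_equiv (Equiv.inv (ZMod p)ˣ) _ _ (fun x => rfl)
  have h3 : ∏ x : (ZMod p)ˣ, (C ((x : ZMod p)) : (ZMod p)[X]) = -1 := by
    rw [← map_prod, prod_units_val]; simp
  rw [h2, h3, prod_X_sub_C_units]
  simp [C_0]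

lemma prodB : ∏ c : ZMod p, (C c * X + 1) = 1 - X ^ (p - 1) := by
  have hre : ∏ c : ZMod p, (C c * X + 1) = ∏ c : ZMod p, (C (-c) * X + 1) :=
    (Fintype.prod_equiv (Equiv.neg (ZMod p)) _ _ (fun c => by simp)).symm
  have hneg : ∀ c : ZMod p, (C (-c) : (ZMod p)[X]) * X + 1 = (-1) * (C c * X - 1) := by
    intro c; rw [C_neg]; ring
  rw [hre, Finset.prod_congr rfl fun c _ => hneg c, Finset.prod_mul_distrib,
    Finset.prod_const, prodA]
  have hcard : (Finset.univ : Finset (ZMod p)).card = p := by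
    simpa using ZMod.card p
  haveI : CharP ((ZMod p)[X]) p := Polynomial.instCharP p
  rw [hcard, neg_one_pow_char]
  ring

lemma prodA' (W : (ZMod p)[X]) :
    ∏ c : ZMod p, (C c * W - 1) = W ^ (p - 1) - 1 := by
  have h := congrArg (aeval W) (prodA (p := p))
  simpa [map_prod] using h

lemma prodB' (W : (ZMod p)[X]) :
    ∏ c : ZMod p, (C c * W + 1) = 1 - W ^ (p - 1) := by
  have h := congrArg (aeval W) (prodB (p := p))
  simpa [map_prod] using h

end VAux

set_option maxHeartbeats 1000000 in
theorem v_p_add (p : ℕ) (hp : p.Prime) :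
    v (p + 1) ≡ 1 [ZMOD (p : ℤ)] ∧ v (p + 2) ≡ 1 [ZMOD (p : ℤ)] := by
  haveI hF : Fact p.Prime := ⟨hp⟩
  obtain ⟨a, rfl⟩ : ∃ a, p = a + 2 := ⟨p - 2, by have := hp.two_le; omega⟩
  set K := ZMod (a + 2) with hK
  haveI : CharP (K[X]) (a + 2) := Polynomial.instCharP (a + 2)
  have hm1 : (-1 : K) ^ a = -1 := by
    have h1 : (-1 : K) ^ (a + 2) = -1 := neg_one_pow_char K (a + 2)
    have h2 : (-1 : K) ^ (a + 2) = (-1 : K) ^ a * ((-1) * (-1)) := by ring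
    rw [h2, neg_one_mul, neg_neg, mul_one] at h1; exact h1
  have hsc : ((a : K) + 2) = 0 := by exact_mod_cast ZMod.natCast_self (a + 2)
  have hfrob : ((X : K[X]) - 1) ^ (a + 2) = X ^ (a + 2) - 1 := by
    have h := sub_pow_char (R := K[X]) (p := a + 2) X 1
    simpa using h
  have hWdeg : ∀ k, a + 2 ≤ k → (((X : K[X]) - 1) ^ (a + 1)).coeff k = 0 := by
    intro k hk
    apply coeff_eq_zero_of_natDegree_lt
    calc (((X : K[X]) - 1) ^ (a + 1)).natDegree ≤ (a + 1) * ((X : K[X]) - 1).natDegree :=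
          natDegree_pow_le
      _ ≤ a + 1 := by
          have : ((X : K[X]) - 1).natDegree = 1 := by
            simpa using natDegree_X_sub_C (1 : K)
          rw [this]; omega
      _ < k := by omega
  have hXC : ((X : K[X]) - 1) = X + C (-1) := by rw [C_neg, C_1]; ring
  have hW0 : (((X : K[X]) - 1) ^ (a + 1)).coeff 0 = 1 := by
    rw [hXC, coeff_X_add_C_pow]
    simp [pow_succ, hm1]
    rw [neg_one_mul, neg_neg]
  have hW1 : (((X : K[X]) - 1) ^ (a + 1)).coeff 1 = 1 := by
    rw [hXC, coeff_X_add_C_pow]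
    have h1 : a + 1 - 1 = a := by omega
    rw [h1, hm1, Nat.choose_one_right]
    have : ((a + 1 : ℕ) : K) = -1 := by push_cast; linear_combination hsc
    rw [this]; ring
  -- the big product, mapped to K
  have hcoe : ∀ (P : ℤ[X]) (k : ℕ), ((P.coeff k : ℤ) : K) = (P.map (Int.castRingHom K)).coeff k := by
    intro P k; rw [coeff_map]; simp
  constructor
  · -- part 1
    have harith1 : a + 2 + 1 = a + 3 := by omega
    rw [harith1]
    have key : ((v (a + 3) : ℤ) : K) = ((1 : ℤ) : K) := by
      rw [v, if_neg (by omega : ¬ a + 3 = 0)]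
      have h1 : 2 * (a + 3) - 2 = 2 * (a + 2) := by omega
      have h2 : a + 3 - 1 = a + 2 := by omega
      rw [h1, h2]
      rw [hcoe]
      rw [Polynomial.map_mul, Polynomial.map_sub, Polynomial.map_one, Polynomial.map_X,
        Polynomial.map_prod]
      have hfac : ∀ j ∈ Finset.range (2 * (a + 2)),
          (C (2 * ((a + 3 : ℕ) : ℤ) - 3 - (j : ℤ)) + C (j : ℤ) * X).map (Int.castRingHom K)
          = C ((j : K)) * (X - 1) - 1 := by
        intro j _
        rw [Polynomial.map_add, Polynomial.map_mul, Polynomial.map_C, Polynomial.map_C,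
          Polynomial.map_X]
        have hc1 : ((Int.castRingHom K) (2 * ((a + 3 : ℕ) : ℤ) - 3 - (j : ℤ))) = -1 - (j : K) := by
          simp only [map_sub, map_mul, map_ofNat, eq_intCast, Int.cast_natCast, Int.cast_ofNat]
          push_cast
          linear_combination (2 : K) * hsc
        have hc2 : ((Int.castRingHom K) ((j : ℤ))) = (j : K) := by
          simp
        rw [hc1, hc2, C_sub, C_neg, C_1]
        ring
      rw [Finset.prod_congr rfl hfac]
      have hsplit : ∏ j ∈ Finset.range (2 * (a + 2)), (C ((j : K)) * (X - 1) - 1)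
          = (∏ j ∈ Finset.range (a + 2), (C ((j : K)) * (X - 1) - 1)) ^ 2 := by
        rw [two_mul, Finset.prod_range_add, sq]
        congr 1
        refine Finset.prod_congr rfl fun i _ => ?_
        have : (((a + 2) + i : ℕ) : K) = (i : K) := by
          push_cast; linear_combination hsc
        rw [this]
      rw [hsplit, VAux.prod_range_cast (p := a + 2) (fun c => C c * (X - 1) - 1),
        VAux.prodA' (p := a + 2) (X - 1)]
      have hsub1 : a + 2 - 1 = a + 1 := by omega
      rw [hsub1]
      -- coefficient computation
      have hE : ((1 : K[X]) - X) * (((X : K[X]) - 1) ^ (a + 1) - 1) ^ 2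
          = -((X ^ (a + 2) - 1) * ((X : K[X]) - 1) ^ (a + 1))
            + ((X ^ (a + 2) - 1) + (X ^ (a + 2) - 1)) - (X - 1) := by
        linear_combination (2 - ((X : K[X]) - 1) ^ (a + 1)) * hfrob
      rw [hE]
      rw [coeff_sub, coeff_add, coeff_neg, coeff_add]
      have hA : ((X ^ (a + 2) - 1) * ((X : K[X]) - 1) ^ (a + 1)).coeff (a + 2) = 1 := by
        rw [sub_mul, one_mul, coeff_sub]
        have h := Polynomial.coeff_X_pow_mul (((X : K[X]) - 1) ^ (a + 1)) (a + 2) 0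
        rw [show 0 + (a + 2) = a + 2 from by omega] at h
        rw [h, hW0, hWdeg (a + 2) le_rfl]
        ring
      have hB : ((X : K[X]) ^ (a + 2) - 1).coeff (a + 2) = 1 := by
        rw [coeff_sub, coeff_X_pow, if_pos rfl, coeff_one, if_neg (by omega)]
        ring
      have hC2 : ((X : K[X]) - 1).coeff (a + 2) = 0 := by
        rw [coeff_sub, coeff_X, if_neg (by omega), coeff_one, if_neg (by omega)]
        ring
      rw [hA, hB, hC2]
      norm_num
    have := (ZMod.intCast_eq_intCast_iff _ _ _).mp key
    exact_mod_cast this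
  · -- part 2
    have harith1 : a + 2 + 2 = a + 4 := by omega
    rw [harith1]
    have key : ((v (a + 4) : ℤ) : K) = ((1 : ℤ) : K) := by
      rw [v, if_neg (by omega : ¬ a + 4 = 0)]
      have h1 : 2 * (a + 4) - 2 = 2 * (a + 2) + 1 + 1 := by omega
      have h2 : a + 4 - 1 = a + 3 := by omega
      rw [h1, h2]
      rw [hcoe]
      rw [Polynomial.map_mul, Polynomial.map_sub, Polynomial.map_one, Polynomial.map_X,
        Polynomial.map_prod]
      rw [Finset.prod_range_succ, Finset.prod_range_succ]
      have hlast1 : (C (2 * ((a + 4 : ℕ) : ℤ) - 3 - ((2 * (a + 2) : ℕ) : ℤ))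
          + C (((2 * (a + 2) : ℕ) : ℤ)) * X).map (Int.castRingHom K) = 1 := by
        rw [Polynomial.map_add, Polynomial.map_mul, Polynomial.map_C, Polynomial.map_C,
          Polynomial.map_X]
        have e1 : ((Int.castRingHom K) (2 * ((a + 4 : ℕ) : ℤ) - 3 - ((2 * (a + 2) : ℕ) : ℤ))) = 1 := by
          rw [eq_intCast]; push_cast; linear_combination (0 : K) * hsc
        have e2 : ((Int.castRingHom K) (((2 * (a + 2) : ℕ) : ℤ))) = 0 := by
          rw [eq_intCast]; push_cast; linear_combination (2 : K) * hsc
        rw [e1, e2, C_1, C_0]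
        ring
      have hlast2 : (C (2 * ((a + 4 : ℕ) : ℤ) - 3 - ((2 * (a + 2) + 1 : ℕ) : ℤ))
          + C (((2 * (a + 2) + 1 : ℕ) : ℤ)) * X).map (Int.castRingHom K) = X := by
        rw [Polynomial.map_add, Polynomial.map_mul, Polynomial.map_C, Polynomial.map_C,
          Polynomial.map_X]
        have e1 : ((Int.castRingHom K) (2 * ((a + 4 : ℕ) : ℤ) - 3 - ((2 * (a + 2) + 1 : ℕ) : ℤ)))
            = 0 := by
          rw [eq_intCast]; push_cast; ring
        have e2 : ((Int.castRingHom K) (((2 * (a + 2) + 1 : ℕ) : ℤ))) = 1 := by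
          rw [eq_intCast]; push_cast; linear_combination (2 : K) * hsc
        rw [e1, e2, C_1, C_0]
        ring
      rw [hlast1, hlast2]
      have hfac : ∀ j ∈ Finset.range (2 * (a + 2)),
          (C (2 * ((a + 4 : ℕ) : ℤ) - 3 - (j : ℤ)) + C (j : ℤ) * X).map (Int.castRingHom K)
          = C ((j : K)) * (X - 1) + 1 := by
        intro j _
        rw [Polynomial.map_add, Polynomial.map_mul, Polynomial.map_C, Polynomial.map_C,
          Polynomial.map_X]
        have hc1 : ((Int.castRingHom K) (2 * ((a + 4 : ℕ) : ℤ) - 3 - (j : ℤ))) = 1 - (j : K) := by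
          rw [eq_intCast]; push_cast; linear_combination (2 : K) * hsc
        have hc2 : ((Int.castRingHom K) ((j : ℤ))) = (j : K) := by simp
        rw [hc1, hc2, C_sub, C_1]
        ring
      rw [Finset.prod_congr rfl hfac]
      have hsplit : ∏ j ∈ Finset.range (2 * (a + 2)), (C ((j : K)) * (X - 1) + 1)
          = (∏ j ∈ Finset.range (a + 2), (C ((j : K)) * (X - 1) + 1)) ^ 2 := by
        rw [two_mul, Finset.prod_range_add, sq]
        congr 1
        refine Finset.prod_congr rfl fun i _ => ?_
        have : (((a + 2) + i : ℕ) : K) = (i : K) := by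
          push_cast; linear_combination hsc
        rw [this]
      rw [hsplit, VAux.prod_range_cast (p := a + 2) (fun c => C c * (X - 1) + 1),
        VAux.prodB' (p := a + 2) (X - 1)]
      have hsub1 : a + 2 - 1 = a + 1 := by omega
      rw [hsub1]
      -- coefficient computation at a + 3
      have hE : ((1 : K[X]) - X) * ((1 - ((X : K[X]) - 1) ^ (a + 1)) ^ 2 * 1 * X)
          = -((X - 1) ^ 2) - (X - 1)
            + (((X ^ (a + 2) - 1) * (X - 1)) + ((X ^ (a + 2) - 1) * (X - 1)))
            + ((X ^ (a + 2) - 1) + (X ^ (a + 2) - 1))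
            - (X ^ (a + 2) - 1) ^ 2
            - (X ^ (a + 2) - 1) * ((X : K[X]) - 1) ^ (a + 1) := by
        linear_combination (2 * ((X : K[X]) - 1) + 2 - (((X : K[X]) - 1) ^ (a + 2)
          + ((X : K[X]) ^ (a + 2) - 1)) - ((X : K[X]) - 1) ^ (a + 1)) * hfrob
      rw [hE]
      rw [coeff_sub, coeff_sub, coeff_add, coeff_add, coeff_sub, coeff_neg,
        coeff_add, coeff_add]
      have c1 : (((X : K[X]) - 1) ^ 2).coeff (a + 3) = 0 := by
        apply coeff_eq_zero_of_natDegree_lt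
        calc (((X : K[X]) - 1) ^ 2).natDegree ≤ 2 * ((X : K[X]) - 1).natDegree :=
              natDegree_pow_le
          _ < a + 3 := by
              have : ((X : K[X]) - 1).natDegree = 1 := by
                simpa using natDegree_X_sub_C (1 : K)
              rw [this]; omega
      have c2 : ((X : K[X]) - 1).coeff (a + 3) = 0 := by
        rw [coeff_sub, coeff_X, if_neg (by omega), coeff_one, if_neg (by omega)]; ring
      have c3 : (((X : K[X]) ^ (a + 2) - 1) * (X - 1)).coeff (a + 3) = 1 := by
        have hexp : ((X : K[X]) ^ (a + 2) - 1) * (X - 1)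
            = X ^ (a + 3) - X ^ (a + 2) - X + 1 := by ring
        rw [hexp, coeff_add, coeff_sub, coeff_sub, coeff_X_pow, coeff_X_pow,
          if_pos rfl, if_neg (by omega), coeff_X, if_neg (by omega), coeff_one,
          if_neg (by omega)]
        ring
      have c4 : ((X : K[X]) ^ (a + 2) - 1).coeff (a + 3) = 0 := by
        rw [coeff_sub, coeff_X_pow, if_neg (by omega), coeff_one, if_neg (by omega)]; ring
      have c5 : (((X : K[X]) ^ (a + 2) - 1) ^ 2).coeff (a + 3) = 0 := by
        have hexp : ((X : K[X]) ^ (a + 2) - 1) ^ 2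
            = X ^ (a + 2 + (a + 2)) - (X ^ (a + 2) + X ^ (a + 2)) + 1 := by ring
        have n1 : a + 3 ≠ a + 2 + (a + 2) := by omega
        have n2 : a + 3 ≠ a + 2 := by omega
        have n3 : a + 3 ≠ 0 := by omega
        simp [hexp, coeff_X_pow, coeff_one, n1, n2, n3]
      have c6 : (((X : K[X]) ^ (a + 2) - 1) * ((X : K[X]) - 1) ^ (a + 1)).coeff (a + 3) = 1 := by
        rw [sub_mul, one_mul, coeff_sub]
        have h := Polynomial.coeff_X_pow_mul (((X : K[X]) - 1) ^ (a + 1)) (a + 2) 1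
        rw [show 1 + (a + 2) = a + 3 from by omega] at h
        rw [h, hW1, hWdeg (a + 3) (by omega)]
        ring
      rw [c1, c2, c3, c4, c5, c6]
      norm_num
    have := (ZMod.intCast_eq_intCast_iff _ _ _).mp key
    exact_mod_cast this
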